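/- Let μ be a Borel probability measure on ℝ^d and Λ a countable subset of ℝ^d. If there is M > 0 with Σ_{λ'∈Λ} |μ^(λ−λ')| ≤ M for all λ ∈ Λ, then {e_λ : λ∈Λ} is a Bessel sequence in L²(μ) with bound M. -/

import Mathlib

open MeasureTheory Complex Finset Matrix
open scoped ENNReal NNReal

noncomputable def tauMap {d : ℕ} (Rr : Matrix (Fin d) (Fin d) ℝ) (b : Fin d → ℤ)
    (x : Fin d → ℝ) : Fin d → ℝ :=
  Rr⁻¹.mulVec (x + fun i => (b i : ℝ))

noncomputable def measOp {d : ℕ} (Rr : Matrix (Fin d) (Fin d) ℝ) (B : Finset (Fin d → ℤ))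
    (μ : Measure (Fin d → ℝ)) : Measure (Fin d → ℝ) :=
  (B.card : ℝ≥0∞)⁻¹ • ∑ b ∈ B, Measure.map (tauMap Rr b) μ

noncomputable def fourierTf {d : ℕ} (μ : Measure (Fin d → ℝ)) (x : Fin d → ℝ) : ℂ :=
  ∫ t, Complex.exp (2 * Real.pi * Complex.I * ((∑ i, x i * t i : ℝ) : ℂ)) ∂μ

noncomputable def expFn {d : ℕ} (l : Fin d → ℝ) (x : Fin d → ℝ) : ℂ :=
  Complex.exp (2 * Real.pi * Complex.I * ((∑ i, l i * x i : ℝ) : ℂ))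

/-- `Λ` is a spectrum for `μ`: the exponentials `e_λ`, `λ ∈ Λ`, form an orthonormal
basis of `L²(μ)`, expressed as orthonormality together with completeness. -/
def IsSpectral {d : ℕ} (μ : Measure (Fin d → ℝ)) (Λ : Set (Fin d → ℝ)) : Prop :=
  (∀ l1 ∈ Λ, ∀ l2 ∈ Λ, l1 ≠ l2 →
      ∫ x, expFn l1 x * (starRingEnd ℂ) (expFn l2 x) ∂μ = 0) ∧
  (∀ f : (Fin d → ℝ) → ℂ, MemLp f 2 μ →
      (∀ l ∈ Λ, ∫ x, f x * (starRingEnd ℂ) (expFn l x) ∂μ = 0) → f =ᵐ[μ] 0)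

noncomputable def hadamardMatrix {d : ℕ} (R : Matrix (Fin d) (Fin d) ℤ)
    (B L : Finset (Fin d → ℤ)) : Matrix {b // b ∈ B} {l // l ∈ L} ℂ :=
  fun b l => (Real.sqrt B.card : ℂ)⁻¹ * Complex.exp (2 * Real.pi * Complex.I *
    ((∑ i, ((R.map ((↑) : ℤ → ℝ))⁻¹.mulVec (fun j => ((b : Fin d → ℤ) j : ℝ))) i *
      ((l : Fin d → ℤ) i : ℝ) : ℝ) : ℂ))

def IsHadamardPair {d : ℕ} (R : Matrix (Fin d) (Fin d) ℤ)
    (B L : Finset (Fin d → ℤ)) : Prop :=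
  (hadamardMatrix R B L)ᴴ * hadamardMatrix R B L = 1 ∧
  hadamardMatrix R B L * (hadamardMatrix R B L)ᴴ = 1

def PiSet {d : ℕ} (B : Finset (Fin d → ℤ)) : Set (Fin d → ℝ) :=
  {γ | ∀ b ∈ B, ∃ m : ℤ, (∑ i, γ i * (b i : ℝ)) = (m : ℝ)}

/-- `SΛ = ∪_{l∈L} (R^T Λ + l)`. -/
def specOp {d : ℕ} (R : Matrix (Fin d) (Fin d) ℤ) (L : Finset (Fin d → ℤ))
    (Λ : Set (Fin d → ℝ)) : Set (Fin d → ℝ) :=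
  ⋃ l ∈ L, (fun γ => ((R.map ((↑) : ℤ → ℝ))ᵀ).mulVec γ + fun i => (l i : ℝ)) '' Λ

/-- `{e_λ : λ ∈ Λ}` is a Bessel sequence in `L²(μ)` with bound `M`. -/
def BesselBound {d : ℕ} (μ : Measure (Fin d → ℝ)) (Λ : Set (Fin d → ℝ)) (M : ℝ) : Prop :=
  ∀ f : (Fin d → ℝ) → ℂ, MemLp f 2 μ →
    ∑' l : Λ, (‖∫ x, f x * (starRingEnd ℂ) (expFn l x) ∂μ‖₊ : ℝ≥0∞) ^ 2 ≤
      ENNReal.ofReal M * ∫⁻ x, (‖f x‖₊ : ℝ≥0∞) ^ 2 ∂μ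

lemma expFn_cont {d : ℕ} (l : Fin d → ℝ) : Continuous (expFn l) := by
  unfold expFn; fun_prop

lemma norm_expFn {d : ℕ} (l x : Fin d → ℝ) : ‖expFn l x‖ = 1 := by
  simp [expFn, Complex.norm_exp]

lemma expFn_mul_conj {d : ℕ} (l l' x : Fin d → ℝ) :
    expFn l x * (starRingEnd ℂ) (expFn l' x) = expFn (l - l') x := by
  unfold expFn
  rw [← Complex.exp_conj, ← Complex.exp_add]
  congr 1
  have : ∑ i, (l - l') i * x i = (∑ i, l i * x i) - ∑ i, l' i * x i := by
    simp [sub_mul, Finset.sum_sub_distrib]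
  rw [this]
  simp only [_root_.map_mul, map_ofNat, Complex.conj_ofReal, Complex.conj_I]
  push_cast
  ring

lemma fourierTf_eq {d : ℕ} (μ : Measure (Fin d → ℝ)) (y : Fin d → ℝ) :
    fourierTf μ y = ∫ t, expFn y t ∂μ := rfl

lemma conj_expFn {d : ℕ} (l x : Fin d → ℝ) :
    (starRingEnd ℂ) (expFn l x) = expFn (-l) x := by
  have := expFn_mul_conj (0 : Fin d → ℝ) l x
  simpa [expFn, zero_sub] using this

lemma norm_fourierTf_symm {d : ℕ} (μ : Measure (Fin d → ℝ)) (a b : Fin d → ℝ) :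
    ‖fourierTf μ (a - b)‖ = ‖fourierTf μ (b - a)‖ := by
  have : fourierTf μ (b - a) = (starRingEnd ℂ) (fourierTf μ (a - b)) := by
    rw [fourierTf_eq, fourierTf_eq, ← integral_conj]
    congr 1; funext t
    rw [conj_expFn, neg_sub]
  rw [this, RCLike.norm_conj]

lemma memLp_expFn {d : ℕ} (μ : Measure (Fin d → ℝ)) [IsProbabilityMeasure μ]
    (l : Fin d → ℝ) : MemLp (expFn l) 2 μ :=
  MemLp.of_bound (expFn_cont l).aestronglyMeasurable 1
    (Filter.Eventually.of_forall fun x => le_of_eq (norm_expFn l x))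

lemma integrable_expFn {d : ℕ} (μ : Measure (Fin d → ℝ)) [IsProbabilityMeasure μ]
    (l : Fin d → ℝ) : Integrable (expFn l) μ :=
  (memLp_expFn μ l).integrable (by norm_num)

lemma integrable_mul_conj_expFn {d : ℕ} {μ : Measure (Fin d → ℝ)} [IsProbabilityMeasure μ]
    {f : (Fin d → ℝ) → ℂ} (hf : MemLp f 2 μ) (l : Fin d → ℝ) :
    Integrable (fun x => f x * (starRingEnd ℂ) (expFn l x)) μ := by
  simp only [conj_expFn]
  have h1 : Integrable f μ := hf.integrable (by norm_num)
  simpa [mul_comm] using h1.bdd_mul ((expFn_cont (-l)).aestronglyMeasurable)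
    (Filter.Eventually.of_forall fun x => le_of_eq (norm_expFn (-l) x))

lemma key_lemma {d : ℕ} (μ : Measure (Fin d → ℝ)) [IsProbabilityMeasure μ]
    (Λ : Set (Fin d → ℝ)) (M : ℝ) (hM : 0 < M)
    (hSchur : ∀ l ∈ Λ,
      (∑' l' : Λ, (‖fourierTf μ (l - (l' : Fin d → ℝ))‖₊ : ℝ≥0∞)) ≤ ENNReal.ofReal M)
    (f : (Fin d → ℝ) → ℂ) (hf : MemLp f 2 μ) (s : Finset Λ) :
    ∑ l ∈ s, ‖∫ x, f x * (starRingEnd ℂ) (expFn (l : Fin d → ℝ) x) ∂μ‖ ^ 2 ≤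
      M * ∫ x, ‖f x‖ ^ 2 ∂μ := by
  classical
  set c : Λ → ℂ := fun l => ∫ x, f x * (starRingEnd ℂ) (expFn (l : Fin d → ℝ) x) ∂μ with hc
  set g : (Fin d → ℝ) → ℂ := fun x => ∑ l ∈ s, c l * expFn (l : Fin d → ℝ) x with hg
  set S : ℝ := ∑ l ∈ s, ‖c l‖ ^ 2 with hSdef
  set A : ℝ := ∫ x, ‖f x‖ ^ 2 ∂μ with hAdef
  set B : ℝ := ∫ x, ‖g x‖ ^ 2 ∂μ with hBdef
  have hS0 : 0 ≤ S := Finset.sum_nonneg fun _ _ => sq_nonneg _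
  have hA0 : 0 ≤ A := integral_nonneg fun x => sq_nonneg _
  have hB0 : 0 ≤ B := integral_nonneg fun x => sq_nonneg _
  -- row sums bounded by M
  have hrow : ∀ a ∈ Λ, ∑ l' ∈ s, ‖fourierTf μ (a - (l' : Fin d → ℝ))‖ ≤ M := by
    intro a ha
    have h1 : ∑ l' ∈ s, (‖fourierTf μ (a - (l' : Fin d → ℝ))‖₊ : ℝ≥0∞) ≤ ENNReal.ofReal M :=
      le_trans (ENNReal.sum_le_tsum s) (hSchur a ha)
    have h2 : ∑ l' ∈ s, (‖fourierTf μ (a - (l' : Fin d → ℝ))‖₊ : ℝ≥0∞) =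
        ENNReal.ofReal (∑ l' ∈ s, ‖fourierTf μ (a - (l' : Fin d → ℝ))‖) := by
      rw [ENNReal.ofReal_sum_of_nonneg fun _ _ => norm_nonneg _]
      exact Finset.sum_congr rfl fun _ _ => (ofReal_norm _).symm
    rw [h2] at h1
    exact (ENNReal.ofReal_le_ofReal_iff hM.le).mp h1
  -- g is in L²
  have hmg : MemLp g 2 μ := by
    exact memLp_finset_sum s fun l _ => (memLp_expFn μ (l : Fin d → ℝ)).const_mul (c l)
  -- ⟨f, g⟩ = S
  have hfg : ∫ x, f x * (starRingEnd ℂ) (g x) ∂μ = (S : ℂ) := by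
    have hpt : ∀ x, f x * (starRingEnd ℂ) (g x) =
        ∑ l ∈ s, (starRingEnd ℂ) (c l) * (f x * (starRingEnd ℂ) (expFn (l : Fin d → ℝ) x)) := by
      intro x
      simp only [hg, map_sum, _root_.map_mul, Finset.mul_sum]
      exact Finset.sum_congr rfl fun l _ => by ring
    rw [integral_congr_ae (Filter.Eventually.of_forall hpt),
      integral_finset_sum s (fun l _ =>
        ((integrable_mul_conj_expFn hf (l : Fin d → ℝ)).const_mul ((starRingEnd ℂ) (c l))))]
    have : ∀ l ∈ s, ∫ x, (starRingEnd ℂ) (c l) * (f x * (starRingEnd ℂ) (expFn (l : Fin d → ℝ) x)) ∂μ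
        = ((‖c l‖ ^ 2 : ℝ) : ℂ) := by
      intro l _
      rw [integral_const_mul]
      have hcl : (∫ a, f a * (starRingEnd ℂ) (expFn ((l : Fin d → ℝ)) a) ∂μ) = c l := rfl
      rw [hcl, mul_comm, Complex.mul_conj]
      norm_cast
      rw [Complex.normSq_eq_norm_sq]
    rw [Finset.sum_congr rfl this, hSdef]
    push_cast
    rfl
  -- S = ‖⟨f,g⟩‖
  have hSnorm : S = ‖∫ x, f x * (starRingEnd ℂ) (g x) ∂μ‖ := by
    rw [hfg, Complex.norm_real, Real.norm_eq_abs, _root_.abs_of_nonneg hS0]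
  -- Cauchy–Schwarz
  have hCS : ‖∫ x, f x * (starRingEnd ℂ) (g x) ∂μ‖ ≤ Real.sqrt A * Real.sqrt B := by
    have h1 : ‖∫ x, f x * (starRingEnd ℂ) (g x) ∂μ‖ ≤ ∫ x, ‖f x‖ * ‖g x‖ ∂μ := by
      refine le_trans (norm_integral_le_integral_norm _) (le_of_eq ?_)
      exact integral_congr_ae (Filter.Eventually.of_forall fun x => by
        simp [norm_mul, RCLike.norm_conj])
    have h2 := integral_mul_norm_le_Lp_mul_Lq (E := ℂ) (μ := μ) (f := f) (g := g)
      (p := 2) (q := 2) ⟨by norm_num, by norm_num, by norm_num⟩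
      (by rw [show ENNReal.ofReal 2 = 2 by norm_num]; exact hf)
      (by rw [show ENNReal.ofReal 2 = 2 by norm_num]; exact hmg)
    refine le_trans h1 (le_trans h2 (le_of_eq ?_))
    have e1 : ∀ h : (Fin d → ℝ) → ℂ, (∫ x, ‖h x‖ ^ (2 : ℝ) ∂μ) = ∫ x, ‖h x‖ ^ 2 ∂μ := by
      intro h
      refine integral_congr_ae (Filter.Eventually.of_forall fun x => ?_)
      show ‖h x‖ ^ (2:ℝ) = ‖h x‖ ^ (2:ℕ)
      rw [show (2:ℝ) = ((2:ℕ):ℝ) by norm_num, Real.rpow_natCast]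
    rw [e1 f, e1 g, ← hAdef, ← hBdef, ← Real.sqrt_eq_rpow, ← Real.sqrt_eq_rpow]
  -- B as a double sum
  have hgg : (B : ℂ) = ∑ l ∈ s, ∑ l' ∈ s,
      (c l * (starRingEnd ℂ) (c l')) * fourierTf μ ((l : Fin d → ℝ) - (l' : Fin d → ℝ)) := by
    have hpt : ∀ x, ((‖g x‖ ^ 2 : ℝ) : ℂ) = ∑ l ∈ s, ∑ l' ∈ s,
        (c l * (starRingEnd ℂ) (c l')) * expFn ((l : Fin d → ℝ) - (l' : Fin d → ℝ)) x := by
      intro x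
      have h0 : ((‖g x‖ ^ 2 : ℝ) : ℂ) = g x * (starRingEnd ℂ) (g x) := by
        rw [Complex.mul_conj]
        norm_cast
        rw [Complex.normSq_eq_norm_sq]
      rw [h0]
      simp only [hg, map_sum, _root_.map_mul, Finset.sum_mul_sum]
      refine Finset.sum_congr rfl fun l _ => Finset.sum_congr rfl fun l' _ => ?_
      rw [← expFn_mul_conj]
      ring
    calc (B : ℂ) = ∫ x, ((‖g x‖ ^ 2 : ℝ) : ℂ) ∂μ := by
          rw [hBdef]; exact (integral_ofReal).symm
      _ = ∫ x, ∑ l ∈ s, ∑ l' ∈ s,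
          (c l * (starRingEnd ℂ) (c l')) * expFn ((l : Fin d → ℝ) - (l' : Fin d → ℝ)) x ∂μ :=
        integral_congr_ae (Filter.Eventually.of_forall hpt)
      _ = ∑ l ∈ s, ∑ l' ∈ s,
          (c l * (starRingEnd ℂ) (c l')) * fourierTf μ ((l : Fin d → ℝ) - (l' : Fin d → ℝ)) := by
        rw [integral_finset_sum s (fun l _ => integrable_finset_sum s fun l' _ =>
          (integrable_expFn μ _).const_mul _)]
        refine Finset.sum_congr rfl fun l _ => ?_
        rw [integral_finset_sum s (fun l' _ => (integrable_expFn μ _).const_mul _)]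
        exact Finset.sum_congr rfl fun l' _ => by rw [integral_const_mul, fourierTf_eq]
  -- Schur bound: B ≤ M * S
  have hBMS : B ≤ M * S := by
    have hBnorm : B = ‖(B : ℂ)‖ := by
      rw [Complex.norm_real, Real.norm_eq_abs, _root_.abs_of_nonneg hB0]
    have h1 : B ≤ ∑ l ∈ s, ∑ l' ∈ s,
        ‖c l‖ * ‖c l'‖ * ‖fourierTf μ ((l : Fin d → ℝ) - (l' : Fin d → ℝ))‖ := by
      rw [hBnorm, hgg]
      refine le_trans (norm_sum_le _ _) (Finset.sum_le_sum fun l _ => ?_)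
      refine le_trans (norm_sum_le _ _) (Finset.sum_le_sum fun l' _ => ?_)
      rw [norm_mul, norm_mul, RCLike.norm_conj]
    have h2 : ∑ l ∈ s, ∑ l' ∈ s,
        ‖c l‖ * ‖c l'‖ * ‖fourierTf μ ((l : Fin d → ℝ) - (l' : Fin d → ℝ))‖ ≤
        ∑ l ∈ s, ∑ l' ∈ s, (‖c l‖ ^ 2 + ‖c l'‖ ^ 2) / 2 *
          ‖fourierTf μ ((l : Fin d → ℝ) - (l' : Fin d → ℝ))‖ := by
      refine Finset.sum_le_sum fun l _ => Finset.sum_le_sum fun l' _ => ?_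
      exact mul_le_mul_of_nonneg_right (by nlinarith [sq_nonneg (‖c l‖ - ‖c l'‖)])
        (norm_nonneg _)
    have hsplit : ∑ l ∈ s, ∑ l' ∈ s, (‖c l‖ ^ 2 + ‖c l'‖ ^ 2) / 2 *
          ‖fourierTf μ ((l : Fin d → ℝ) - (l' : Fin d → ℝ))‖ =
        (∑ l ∈ s, ∑ l' ∈ s, ‖c l‖ ^ 2 * ‖fourierTf μ ((l : Fin d → ℝ) - (l' : Fin d → ℝ))‖) / 2 +
        (∑ l ∈ s, ∑ l' ∈ s, ‖c l'‖ ^ 2 * ‖fourierTf μ ((l : Fin d → ℝ) - (l' : Fin d → ℝ))‖) / 2 := by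
      rw [Finset.sum_div, Finset.sum_div, ← Finset.sum_add_distrib]
      refine Finset.sum_congr rfl fun l _ => ?_
      rw [Finset.sum_div, Finset.sum_div, ← Finset.sum_add_distrib]
      exact Finset.sum_congr rfl fun l' _ => by ring
    have hterm1 : ∑ l ∈ s, ∑ l' ∈ s,
        ‖c l‖ ^ 2 * ‖fourierTf μ ((l : Fin d → ℝ) - (l' : Fin d → ℝ))‖ ≤ M * S := by
      calc ∑ l ∈ s, ∑ l' ∈ s, ‖c l‖ ^ 2 * ‖fourierTf μ ((l : Fin d → ℝ) - (l' : Fin d → ℝ))‖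
          = ∑ l ∈ s, ‖c l‖ ^ 2 * ∑ l' ∈ s, ‖fourierTf μ ((l : Fin d → ℝ) - (l' : Fin d → ℝ))‖ := by
            exact Finset.sum_congr rfl fun l _ => (Finset.mul_sum _ _ _).symm
        _ ≤ ∑ l ∈ s, ‖c l‖ ^ 2 * M := Finset.sum_le_sum fun l _ =>
            mul_le_mul_of_nonneg_left (hrow _ l.2) (sq_nonneg _)
        _ = M * S := by rw [← Finset.sum_mul, mul_comm]
    have hterm2 : ∑ l ∈ s, ∑ l' ∈ s,
        ‖c l'‖ ^ 2 * ‖fourierTf μ ((l : Fin d → ℝ) - (l' : Fin d → ℝ))‖ ≤ M * S := by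
      rw [Finset.sum_comm]
      calc ∑ l' ∈ s, ∑ l ∈ s, ‖c l'‖ ^ 2 * ‖fourierTf μ ((l : Fin d → ℝ) - (l' : Fin d → ℝ))‖
          = ∑ l' ∈ s, ‖c l'‖ ^ 2 * ∑ l ∈ s, ‖fourierTf μ ((l' : Fin d → ℝ) - (l : Fin d → ℝ))‖ := by
            refine Finset.sum_congr rfl fun l' _ => ?_
            rw [Finset.mul_sum]
            exact Finset.sum_congr rfl fun l _ => by rw [norm_fourierTf_symm]
        _ ≤ ∑ l' ∈ s, ‖c l'‖ ^ 2 * M := Finset.sum_le_sum fun l' _ =>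
            mul_le_mul_of_nonneg_left (hrow _ l'.2) (sq_nonneg _)
        _ = M * S := by rw [← Finset.sum_mul, mul_comm]
    calc B ≤ _ := h1
      _ ≤ _ := h2
      _ = _ := hsplit
      _ ≤ M * S / 2 + M * S / 2 := by gcongr
      _ = M * S := by ring
  -- combine
  have hfinal : S ≤ M * A := by
    have h1 : S ≤ Real.sqrt A * Real.sqrt B := hSnorm ▸ hCS
    have h2 : S ^ 2 ≤ A * B := by
      calc S ^ 2 ≤ (Real.sqrt A * Real.sqrt B) ^ 2 := by
            exact pow_le_pow_left₀ hS0 h1 2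
        _ = A * B := by rw [mul_pow, Real.sq_sqrt hA0, Real.sq_sqrt hB0]
    have h3 : S ^ 2 ≤ A * (M * S) := le_trans h2 (mul_le_mul_of_nonneg_left hBMS hA0)
    rcases eq_or_lt_of_le hS0 with h | h
    · rw [← h]; positivity
    · nlinarith
  exact hfinal

theorem bessel_of_schur {d : ℕ} (μ : Measure (Fin d → ℝ)) [IsProbabilityMeasure μ]
    (Λ : Set (Fin d → ℝ)) (hΛc : Λ.Countable) (M : ℝ) (hM : 0 < M)
    (hSchur : ∀ l ∈ Λ,
      (∑' l' : Λ, (‖fourierTf μ (l - (l' : Fin d → ℝ))‖₊ : ℝ≥0∞)) ≤ ENNReal.ofReal M) :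
    BesselBound μ Λ M := by
  intro f hf
  set A := ∫ x, ‖f x‖ ^ 2 ∂μ with hA
  have hAint : Integrable (fun x => ‖f x‖ ^ 2) μ := by
    have h := hf.integrable_norm_rpow (by norm_num) (by norm_num)
    refine h.congr (Filter.Eventually.of_forall fun x => ?_)
    show ‖f x‖ ^ (2:ℝ≥0∞).toReal = ‖f x‖ ^ (2:ℕ)
    rw [show ((2:ℝ≥0∞)).toReal = ((2:ℕ):ℝ) by norm_num, Real.rpow_natCast]
  have hlin : ∫⁻ x, (‖f x‖₊ : ℝ≥0∞) ^ 2 ∂μ = ENNReal.ofReal A := by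
    rw [hA, ofReal_integral_eq_lintegral_ofReal hAint
      (Filter.Eventually.of_forall fun x => sq_nonneg _)]
    refine lintegral_congr fun x => ?_
    rw [ENNReal.ofReal_pow (norm_nonneg _), ofReal_norm, enorm_eq_nnnorm]
  calc ∑' l : Λ, (‖∫ x, f x * (starRingEnd ℂ) (expFn (l : Fin d → ℝ) x) ∂μ‖₊ : ℝ≥0∞) ^ 2
      ≤ ENNReal.ofReal (M * A) := by
        rw [ENNReal.tsum_eq_iSup_sum]
        refine iSup_le fun s => ?_
        have hkey := key_lemma μ Λ M hM hSchur f hf s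
        calc ∑ l ∈ s, (‖∫ x, f x * (starRingEnd ℂ) (expFn (l : Fin d → ℝ) x) ∂μ‖₊ : ℝ≥0∞) ^ 2
            = ENNReal.ofReal
              (∑ l ∈ s, ‖∫ x, f x * (starRingEnd ℂ) (expFn (l : Fin d → ℝ) x) ∂μ‖ ^ 2) := by
              rw [ENNReal.ofReal_sum_of_nonneg (fun _ _ => sq_nonneg _)]
              exact Finset.sum_congr rfl fun l _ => by
                rw [ENNReal.ofReal_pow (norm_nonneg _), ofReal_norm, enorm_eq_nnnorm]
          _ ≤ ENNReal.ofReal (M * A) := ENNReal.ofReal_le_ofReal hkey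
    _ = ENNReal.ofReal M * ∫⁻ x, (‖f x‖₊ : ℝ≥0∞) ^ 2 ∂μ := by
        rw [ENNReal.ofReal_mul hM.le, hlin]
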